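/- Let W : (0,1)² → [0,1] be measurable, symmetric, with ess inf W > 0, suppose every point of (0,1)² is either a Lebesgue point of W or W attains its essential infimum c there (after modification on a null set), and let F = {x_1 < … < x_r} ⊂ (0,1). Then inf_{A} (1/λ(A)²) ∫∫_{A×A} log(1/W) dλ² ≤ −( (r−1)/r · (2/(r(r−1))) Σ_{i<j} log W(x_i,x_j) + (1/r) log c ), where the infimum is over positive-measure measurable A ⊆ (0,1). -/

import Mathlib

open MeasureTheory Set Filter

private lemma log_one_div_lip {c a b : ℝ} (hc : 0 < c) (ha : c ≤ a) (hb : c ≤ b) :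
    |Real.log (1/a) - Real.log (1/b)| ≤ |a - b| / c := by
  have key : ∀ u v : ℝ, c ≤ u → c ≤ v → u ≤ v → Real.log v - Real.log u ≤ (v - u) / c := by
    intro u v hu hv huv
    have hu0 : 0 < u := lt_of_lt_of_le hc hu
    have hv0 : 0 < v := lt_of_lt_of_le hc hv
    have h1 : Real.log v - Real.log u = Real.log (v / u) := (Real.log_div hv0.ne' hu0.ne').symm
    have h2 : Real.log (v / u) ≤ v / u - 1 := Real.log_le_sub_one_of_pos (by positivity)
    have h3 : v / u - 1 = (v - u) / u := by field_simp
    have h4 : (v - u) / u ≤ (v - u) / c := by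
      gcongr
    linarith
  have ha0 : 0 < a := lt_of_lt_of_le hc ha
  have hb0 : 0 < b := lt_of_lt_of_le hc hb
  rw [one_div, one_div, Real.log_inv, Real.log_inv]
  have heq : -Real.log a - -Real.log b = Real.log b - Real.log a := by ring
  rw [heq]
  rcases le_total a b with h | h
  · rw [abs_of_nonneg (sub_nonneg.2 (Real.log_le_log ha0 h)), abs_sub_comm,
      abs_of_nonneg (sub_nonneg.2 h)]
    exact key a b ha hb h
  · rw [abs_of_nonpos (sub_nonpos.2 (Real.log_le_log hb0 h)), abs_of_nonneg (sub_nonneg.2 h)]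
    have := key b a hb ha h
    linarith

theorem inf_average_le_point_bound (W : ℝ → ℝ → ℝ) (c : ℝ) (hc : 0 < c)
    (hmeas : Measurable (Function.uncurry W)) (hsymm : ∀ x y, W x y = W y x)
    (hrange : ∀ x y, x ∈ Set.Ioo (0 : ℝ) 1 → y ∈ Set.Ioo (0 : ℝ) 1 →
      W x y ∈ Set.Icc c 1)
    (hessinf : essInf (fun z : ℝ × ℝ => W z.1 z.2)
      ((volume.restrict (Set.Ioo (0 : ℝ) 1)).prod
        (volume.restrict (Set.Ioo (0 : ℝ) 1))) = c)
    (hpt : ∀ x y, x ∈ Set.Ioo (0 : ℝ) 1 → y ∈ Set.Ioo (0 : ℝ) 1 →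
      (Tendsto (fun r : ℝ =>
          ((volume (Metric.closedBall ((x, y) : ℝ × ℝ) r)).toReal)⁻¹ *
            ∫ z in Metric.closedBall ((x, y) : ℝ × ℝ) r, |W z.1 z.2 - W x y|
              ∂(volume : Measure (ℝ × ℝ)))
        (nhdsWithin 0 (Set.Ioi 0)) (nhds 0)) ∨ W x y = c)
    (r : ℕ) (hr : 2 ≤ r) (x : Fin r → ℝ) (hmono : StrictMono x)
    (hxin : ∀ i, x i ∈ Set.Ioo (0 : ℝ) 1) :
    sInf {t : ℝ | ∃ A : Set ℝ, A ⊆ Set.Ioo 0 1 ∧ MeasurableSet A ∧ 0 < volume A ∧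
        t = (1 / ((volume A).toReal ^ 2)) *
          ∫ z in A ×ˢ A, Real.log (1 / W z.1 z.2) ∂(volume : Measure (ℝ × ℝ))} ≤
      -(((r : ℝ) - 1) / r * (2 / ((r : ℝ) * ((r : ℝ) - 1))) *
          (∑ p ∈ Finset.univ.filter (fun p : Fin r × Fin r => p.1 < p.2),
            Real.log (W (x p.1) (x p.2))) +
        (1 / (r : ℝ)) * Real.log c) := by
  classical
  have hr2 : (2:ℝ) ≤ (r:ℝ) := by exact_mod_cast hr
  have hrpos : (0:ℝ) < r := by linarith
  have i0 : Fin r := ⟨0, by omega⟩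
  have hc1 : c ≤ 1 := le_trans (hrange _ _ (hxin i0) (hxin i0)).1 (hrange _ _ (hxin i0) (hxin i0)).2
  have hgm : Measurable (fun z : ℝ × ℝ => Real.log (1 / W z.1 z.2)) :=
    (measurable_const.div hmeas).log
  have hg0 : ∀ z : ℝ × ℝ, z.1 ∈ Set.Ioo (0:ℝ) 1 → z.2 ∈ Set.Ioo (0:ℝ) 1 →
      0 ≤ Real.log (1 / W z.1 z.2) ∧ Real.log (1 / W z.1 z.2) ≤ Real.log (1/c) := by
    intro z h1 h2
    obtain ⟨hcW, hW1⟩ := hrange _ _ h1 h2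
    have hW0 : 0 < W z.1 z.2 := lt_of_lt_of_le hc hcW
    constructor
    · exact Real.log_nonneg (one_le_one_div hW0 hW1)
    · exact Real.log_le_log (by positivity) (one_div_le_one_div_of_le hc hcW)
  -- the set is bounded below by 0
  have hbdd : BddBelow {t : ℝ | ∃ A : Set ℝ, A ⊆ Set.Ioo 0 1 ∧ MeasurableSet A ∧ 0 < volume A ∧
      t = (1 / ((volume A).toReal ^ 2)) *
        ∫ z in A ×ˢ A, Real.log (1 / W z.1 z.2) ∂(volume : Measure (ℝ × ℝ))} := by
    refine ⟨0, fun t ht => ?_⟩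
    obtain ⟨A, hA1, hA2, _, rfl⟩ := ht
    have h1 : 0 ≤ ∫ z in A ×ˢ A, Real.log (1 / W z.1 z.2) ∂(volume : Measure (ℝ × ℝ)) := by
      apply setIntegral_nonneg (hA2.prod hA2)
      intro z hz
      exact (hg0 z (hA1 hz.1) (hA1 hz.2)).1
    have h2 : (0:ℝ) ≤ 1 / ((volume A).toReal ^ 2) := by positivity
    exact mul_nonneg h2 h1
  -- Step A: sInf ≤ (1/r²) Σ_{all pairs} log(1/W)
  have hA : ∀ ε : ℝ, 0 < ε →
      ∃ t ∈ {t : ℝ | ∃ A : Set ℝ, A ⊆ Set.Ioo 0 1 ∧ MeasurableSet A ∧ 0 < volume A ∧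
        t = (1 / ((volume A).toReal ^ 2)) *
          ∫ z in A ×ˢ A, Real.log (1 / W z.1 z.2) ∂(volume : Measure (ℝ × ℝ))},
      t ≤ (1/(r:ℝ)^2) * (∑ p : Fin r × Fin r, Real.log (1 / W (x p.1) (x p.2))) + ε := by
    intro ε hε
    -- eventual conditions on δ
    have ev1 : ∀ᶠ δ in nhdsWithin (0:ℝ) (Set.Ioi 0), 0 < δ := eventually_mem_nhdsWithin
    have ev2 : ∀ᶠ δ in nhdsWithin (0:ℝ) (Set.Ioi 0), ∀ i : Fin r, δ < x i ∧ δ < 1 - x i := by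
      rw [eventually_all]
      intro i
      apply Filter.Eventually.filter_mono nhdsWithin_le_nhds
      have h1 : Set.Iio (min (x i) (1 - x i)) ∈ nhds (0:ℝ) := Iio_mem_nhds (by
        obtain ⟨ha, hb⟩ := hxin i
        rw [lt_min_iff]
        constructor <;> linarith)
      filter_upwards [h1] with δ hδ
      rw [Set.mem_Iio, lt_min_iff] at hδ
      exact hδ
    have ev3 : ∀ᶠ δ in nhdsWithin (0:ℝ) (Set.Ioi 0), ∀ i j : Fin r, i < j → 2*δ < x j - x i := by
      rw [eventually_all]
      intro i
      rw [eventually_all]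
      intro j
      by_cases hij : i < j
      · apply Filter.Eventually.filter_mono nhdsWithin_le_nhds
        have hlt := hmono hij
        have h1 : Set.Iio ((x j - x i)/2) ∈ nhds (0:ℝ) := Iio_mem_nhds (by linarith)
        filter_upwards [h1] with δ hδ _
        rw [Set.mem_Iio] at hδ
        linarith
      · filter_upwards with δ h
        exact absurd h hij
    have ev4 : ∀ᶠ δ in nhdsWithin (0:ℝ) (Set.Ioi 0), ∀ p : Fin r × Fin r,
        (∫ z in Metric.closedBall ((x p.1, x p.2) : ℝ×ℝ) δ, |W z.1 z.2 - W (x p.1) (x p.2)|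
            ∂(volume : Measure (ℝ × ℝ))) ≤
          c * ε * ((volume (Metric.closedBall ((x p.1, x p.2):ℝ×ℝ) δ)).toReal)
        ∨ W (x p.1) (x p.2) = c := by
      rw [eventually_all]
      intro p
      rcases hpt (x p.1) (x p.2) (hxin p.1) (hxin p.2) with htend | heqc
      · have h1 := htend.eventually_lt_const (by positivity : (0:ℝ) < c * ε)
        filter_upwards [h1, eventually_mem_nhdsWithin] with δ hδ hδpos
        left
        have hδ0 : (0:ℝ) < δ := hδpos
        have hV : volume (Metric.closedBall ((x p.1, x p.2):ℝ×ℝ) δ)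
            = ENNReal.ofReal (2*δ) * ENNReal.ofReal (2*δ) := by
          rw [← _root_.closedBall_prod_same, Measure.volume_eq_prod, Measure.prod_prod,
            Real.volume_closedBall, Real.volume_closedBall]
        have hVpos : 0 < (volume (Metric.closedBall ((x p.1, x p.2):ℝ×ℝ) δ)).toReal := by
          rw [hV, ENNReal.toReal_mul, ENNReal.toReal_ofReal (by linarith)]
          positivity
        have hI := mul_le_mul_of_nonneg_left hδ.le hVpos.le
        rw [← mul_assoc, mul_inv_cancel₀ hVpos.ne', one_mul] at hI
        linarith
      · filter_upwards with δ
        exact Or.inr heqc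
    obtain ⟨δ, hδpos, hbd, hgap, hintc⟩ := (ev1.and (ev2.and (ev3.and ev4))).exists
    -- the set A
    set S : Fin r → Set ℝ := fun i => Set.Icc (x i - δ) (x i + δ) with hSdef
    set A : Set ℝ := ⋃ i, S i with hAdef
    have hSsub : ∀ i, S i ⊆ Set.Ioo (0:ℝ) 1 := by
      intro i y hy
      obtain ⟨h1, h2⟩ := hy
      obtain ⟨hb1, hb2⟩ := hbd i
      constructor <;> [linarith; linarith]
    have hAsub : A ⊆ Set.Ioo (0:ℝ) 1 := Set.iUnion_subset hSsub
    have hSm : ∀ i, MeasurableSet (S i) := fun i => measurableSet_Icc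
    have hAm : MeasurableSet A := MeasurableSet.iUnion hSm
    have hdIcc : ∀ i j : Fin r, i < j → Disjoint (S i) (S j) := by
      intro i j hij
      rw [Set.disjoint_left]
      rintro y ⟨_, hy2⟩ ⟨hy3, _⟩
      have := hgap i j hij
      linarith
    have hdisj : Pairwise (Function.onFun Disjoint S) := by
      intro i j hij
      rcases hij.lt_or_gt with h | h
      · exact hdIcc i j h
      · exact (hdIcc j i h).symm
    have hvolS : ∀ i, volume (S i) = ENNReal.ofReal (2*δ) := by
      intro i
      rw [hSdef]
      rw [Real.volume_Icc]
      congr 1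
      ring
    have hvolA : volume A = (r : ENNReal) * ENNReal.ofReal (2*δ) := by
      rw [hAdef, measure_iUnion hdisj hSm]
      simp only [hvolS]
      rw [tsum_fintype]
      simp [Finset.card_univ, nsmul_eq_mul]
    have hvolApos : 0 < volume A := by
      rw [hvolA]
      apply ENNReal.mul_pos
      · simp
        omega
      · simp only [ne_eq, ENNReal.ofReal_eq_zero, not_le]
        linarith
    have hvolAtoReal : (volume A).toReal = r * (2*δ) := by
      rw [hvolA, ENNReal.toReal_mul, ENNReal.toReal_ofReal (by linarith), ENNReal.toReal_natCast]
    -- squares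
    have hsubIoo : ∀ p : Fin r × Fin r, (S p.1 ×ˢ S p.2 : Set (ℝ×ℝ)) ⊆ Set.Ioo (0:ℝ) 1 ×ˢ Set.Ioo (0:ℝ) 1 :=
      fun p => Set.prod_mono (hSsub _) (hSsub _)
    have hBeq : ∀ p : Fin r × Fin r, S p.1 ×ˢ S p.2 = Metric.closedBall ((x p.1, x p.2) : ℝ×ℝ) δ := by
      intro p
      rw [← _root_.closedBall_prod_same, Real.closedBall_eq_Icc, Real.closedBall_eq_Icc]
    have hvolBfin : ∀ p : Fin r × Fin r, volume (S p.1 ×ˢ S p.2 : Set (ℝ×ℝ)) < ⊤ := by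
      intro p
      rw [Measure.volume_eq_prod, Measure.prod_prod, hvolS, hvolS]
      exact ENNReal.mul_lt_top ENNReal.ofReal_lt_top ENNReal.ofReal_lt_top
    have hvolB : ∀ p : Fin r × Fin r, (volume (S p.1 ×ˢ S p.2 : Set (ℝ×ℝ))).toReal = (2*δ) * (2*δ) := by
      intro p
      rw [Measure.volume_eq_prod, Measure.prod_prod, hvolS, hvolS, ENNReal.toReal_mul,
        ENNReal.toReal_ofReal (by linarith)]
    -- integrability
    have hIntg : ∀ (T : Set (ℝ×ℝ)), T ⊆ Set.Ioo (0:ℝ) 1 ×ˢ Set.Ioo (0:ℝ) 1 → MeasurableSet T →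
        IntegrableOn (fun z : ℝ×ℝ => Real.log (1 / W z.1 z.2)) T volume := by
      intro T hT hTm
      apply Measure.integrableOn_of_bounded (M := Real.log (1/c))
      · refine ne_of_lt (lt_of_le_of_lt (measure_mono hT) ?_)
        rw [Measure.volume_eq_prod, Measure.prod_prod]
        exact ENNReal.mul_lt_top (measure_Ioo_lt_top) (measure_Ioo_lt_top)
      · exact hgm.aestronglyMeasurable
      · apply ae_restrict_of_forall_mem hTm
        intro z hz
        obtain ⟨h1, h2⟩ := hT hz
        have h3 := hg0 z h1 h2
        rw [Real.norm_eq_abs, abs_of_nonneg h3.1]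
        exact h3.2
    have hIntA : IntegrableOn (fun z : ℝ×ℝ => Real.log (1 / W z.1 z.2)) (A ×ˢ A) volume :=
      hIntg _ (Set.prod_mono hAsub hAsub) (hAm.prod hAm)
    -- decomposition of the integral
    have hprodeq : A ×ˢ A = ⋃ p : Fin r × Fin r, S p.1 ×ˢ S p.2 := by
      ext z
      simp only [hAdef, Set.mem_prod, Set.mem_iUnion]
      constructor
      · rintro ⟨⟨i, hi⟩, ⟨j, hj⟩⟩
        exact ⟨(i, j), hi, hj⟩
      · rintro ⟨p, hp1, hp2⟩
        exact ⟨⟨p.1, hp1⟩, ⟨p.2, hp2⟩⟩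
    have hdisj2 : Pairwise (Function.onFun Disjoint fun p : Fin r × Fin r => S p.1 ×ˢ S p.2) := by
      intro p q hpq
      by_cases h1 : p.1 = q.1
      · have h2 : p.2 ≠ q.2 := fun h2 => hpq (Prod.ext h1 h2)
        exact Set.Disjoint.set_prod_right (hdisj h2) _ _
      · exact Set.Disjoint.set_prod_left (hdisj h1) _ _
    have hsplit : (∫ z in A ×ˢ A, Real.log (1 / W z.1 z.2) ∂(volume : Measure (ℝ×ℝ)))
        = ∑ p : Fin r × Fin r, ∫ z in S p.1 ×ˢ S p.2, Real.log (1 / W z.1 z.2)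
            ∂(volume : Measure (ℝ×ℝ)) := by
      rw [hprodeq, integral_iUnion (fun p => (hSm _).prod (hSm _)) hdisj2 (hprodeq ▸ hIntA)]
      exact tsum_fintype _
    -- per-square bound
    have hsq : ∀ p : Fin r × Fin r,
        (∫ z in S p.1 ×ˢ S p.2, Real.log (1 / W z.1 z.2) ∂(volume : Measure (ℝ×ℝ)))
        ≤ (2*δ)*(2*δ) * (Real.log (1 / W (x p.1) (x p.2)) + ε) := by
      intro p
      have hm : MeasurableSet (S p.1 ×ˢ S p.2 : Set (ℝ×ℝ)) := (hSm _).prod (hSm _)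
      have hI : IntegrableOn (fun z : ℝ×ℝ => Real.log (1 / W z.1 z.2)) (S p.1 ×ˢ S p.2) volume :=
        hIntg _ (hsubIoo p) hm
      have hWp := hrange (x p.1) (x p.2) (hxin p.1) (hxin p.2)
      have hWz : ∀ z : ℝ×ℝ, z ∈ (S p.1 ×ˢ S p.2 : Set (ℝ×ℝ)) → c ≤ W z.1 z.2 ∧ W z.1 z.2 ≤ 1 := by
        intro z hz
        obtain ⟨h1, h2⟩ := hsubIoo p hz
        exact ⟨(hrange _ _ h1 h2).1, (hrange _ _ h1 h2).2⟩
      have hconst : IntegrableOn (fun _ : ℝ×ℝ => Real.log (1 / W (x p.1) (x p.2)))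
          (S p.1 ×ˢ S p.2) volume := integrableOn_const (hvolBfin p).ne
      rcases hintc p with hintp | heqc
      · -- Lebesgue point case
        rw [← hBeq p] at hintp
        rw [hvolB p] at hintp
        have hIW : IntegrableOn (fun z : ℝ×ℝ => |W z.1 z.2 - W (x p.1) (x p.2)|)
            (S p.1 ×ˢ S p.2) volume := by
          apply Measure.integrableOn_of_bounded (M := 2) (hvolBfin p).ne
          · exact ((hmeas.sub measurable_const).abs).aestronglyMeasurable
          · apply ae_restrict_of_forall_mem hm
            intro z hz
            obtain ⟨hz1, hz2⟩ := hWz z hz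
            rw [Real.norm_eq_abs, abs_abs, abs_sub_le_iff]
            constructor <;> nlinarith [hWp.1, hWp.2]
        have step1 : (∫ z in S p.1 ×ˢ S p.2,
              (Real.log (1 / W z.1 z.2) - Real.log (1 / W (x p.1) (x p.2)))
              ∂(volume : Measure (ℝ×ℝ)))
            ≤ ∫ z in S p.1 ×ˢ S p.2, |W z.1 z.2 - W (x p.1) (x p.2)| / c
              ∂(volume : Measure (ℝ×ℝ)) := by
          apply setIntegral_mono_on (hI.sub hconst) (hIW.div_const c) hm
          intro z hz
          calc Real.log (1 / W z.1 z.2) - Real.log (1 / W (x p.1) (x p.2))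
              ≤ |Real.log (1 / W z.1 z.2) - Real.log (1 / W (x p.1) (x p.2))| := le_abs_self _
            _ ≤ _ := log_one_div_lip hc (hWz z hz).1 hWp.1
        have step2 : (∫ z in S p.1 ×ˢ S p.2, |W z.1 z.2 - W (x p.1) (x p.2)| / c
              ∂(volume : Measure (ℝ×ℝ)))
            = (∫ z in S p.1 ×ˢ S p.2, |W z.1 z.2 - W (x p.1) (x p.2)|
              ∂(volume : Measure (ℝ×ℝ))) / c := integral_div c _
        have step3 : (∫ z in S p.1 ×ˢ S p.2, |W z.1 z.2 - W (x p.1) (x p.2)|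
              ∂(volume : Measure (ℝ×ℝ))) / c ≤ (c * ε * ((2*δ)*(2*δ))) / c := by
          gcongr
        have hce : c * ε * ((2*δ)*(2*δ)) / c = ε * ((2*δ)*(2*δ)) := by field_simp
        have hsub : (∫ z in S p.1 ×ˢ S p.2,
              (Real.log (1 / W z.1 z.2) - Real.log (1 / W (x p.1) (x p.2)))
              ∂(volume : Measure (ℝ×ℝ)))
            = (∫ z in S p.1 ×ˢ S p.2, Real.log (1 / W z.1 z.2) ∂(volume : Measure (ℝ×ℝ)))
              - ((2*δ)*(2*δ)) * Real.log (1 / W (x p.1) (x p.2)) := by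
          rw [integral_sub hI hconst, setIntegral_const, smul_eq_mul, measureReal_def, hvolB p]
        rw [hsub] at step1
        rw [hce] at step3
        rw [step2] at step1
        nlinarith [step1, step3]
      · -- degenerate case
        have hub : (∫ z in S p.1 ×ˢ S p.2, Real.log (1 / W z.1 z.2) ∂(volume : Measure (ℝ×ℝ)))
            ≤ ∫ _z in S p.1 ×ˢ S p.2, Real.log (1/c) ∂(volume : Measure (ℝ×ℝ)) := by
          apply setIntegral_mono_on hI (integrableOn_const (hvolBfin p).ne) hm
          intro z hz
          obtain ⟨h1, h2⟩ := hsubIoo p hz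
          exact (hg0 z h1 h2).2
        rw [setIntegral_const, smul_eq_mul, measureReal_def, hvolB p] at hub
        have heq2 : Real.log (1 / W (x p.1) (x p.2)) = Real.log (1/c) := by rw [heqc]
        rw [heq2]
        nlinarith [hub, hδpos, hε]
    -- combine
    refine ⟨(1 / ((volume A).toReal ^ 2)) *
        ∫ z in A ×ˢ A, Real.log (1 / W z.1 z.2) ∂(volume : Measure (ℝ × ℝ)),
      ⟨A, hAsub, hAm, hvolApos, rfl⟩, ?_⟩
    rw [hsplit, hvolAtoReal]
    have hsum : ∑ p : Fin r × Fin r, (∫ z in S p.1 ×ˢ S p.2, Real.log (1 / W z.1 z.2)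
          ∂(volume : Measure (ℝ×ℝ)))
        ≤ (2*δ)*(2*δ) * ((∑ p : Fin r × Fin r, Real.log (1 / W (x p.1) (x p.2))) + (r:ℝ)^2 * ε) := by
      calc ∑ p : Fin r × Fin r, (∫ z in S p.1 ×ˢ S p.2, Real.log (1 / W z.1 z.2)
            ∂(volume : Measure (ℝ×ℝ)))
          ≤ ∑ p : Fin r × Fin r, (2*δ)*(2*δ) * (Real.log (1 / W (x p.1) (x p.2)) + ε) :=
            Finset.sum_le_sum (fun p _ => hsq p)
        _ = _ := by
            rw [← Finset.mul_sum, Finset.sum_add_distrib, Finset.sum_const, Finset.card_univ]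
            simp only [Fintype.card_prod, Fintype.card_fin, nsmul_eq_mul]
            push_cast
            ring
    have hmul : (0:ℝ) ≤ 1 / ((r:ℝ) * (2*δ))^2 := by positivity
    calc (1 / ((r:ℝ) * (2*δ))^2) * (∑ p : Fin r × Fin r,
          ∫ z in S p.1 ×ˢ S p.2, Real.log (1 / W z.1 z.2) ∂(volume : Measure (ℝ×ℝ)))
        ≤ (1 / ((r:ℝ) * (2*δ))^2) * ((2*δ)*(2*δ) *
            ((∑ p : Fin r × Fin r, Real.log (1 / W (x p.1) (x p.2))) + (r:ℝ)^2 * ε)) :=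
          mul_le_mul_of_nonneg_left hsum hmul
      _ = (1/(r:ℝ)^2) * (∑ p : Fin r × Fin r, Real.log (1 / W (x p.1) (x p.2))) + ε := by
          have hδ0 : δ ≠ 0 := ne_of_gt hδpos
          have hrne : (r:ℝ) ≠ 0 := ne_of_gt hrpos
          field_simp
  have hsInfA : sInf {t : ℝ | ∃ A : Set ℝ, A ⊆ Set.Ioo 0 1 ∧ MeasurableSet A ∧ 0 < volume A ∧
      t = (1 / ((volume A).toReal ^ 2)) *
        ∫ z in A ×ˢ A, Real.log (1 / W z.1 z.2) ∂(volume : Measure (ℝ × ℝ))} ≤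
      (1/(r:ℝ)^2) * (∑ p : Fin r × Fin r, Real.log (1 / W (x p.1) (x p.2))) := by
    set I := sInf {t : ℝ | ∃ A : Set ℝ, A ⊆ Set.Ioo 0 1 ∧ MeasurableSet A ∧ 0 < volume A ∧
      t = (1 / ((volume A).toReal ^ 2)) *
        ∫ z in A ×ˢ A, Real.log (1 / W z.1 z.2) ∂(volume : Measure (ℝ × ℝ))} with hI
    set T := (1/(r:ℝ)^2) * (∑ p : Fin r × Fin r, Real.log (1 / W (x p.1) (x p.2))) with hT
    by_contra hcon
    push_neg at hcon
    obtain ⟨t, htmem, htle⟩ := hA ((I - T)/2) (by linarith)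
    have h1 := csInf_le hbdd htmem
    rw [← hI] at h1
    linarith
  -- Step B: (1/r²) Σ_{all pairs} log(1/W) ≤ RHS
  have hB : (1/(r:ℝ)^2) * (∑ p : Fin r × Fin r, Real.log (1 / W (x p.1) (x p.2))) ≤
      -(((r : ℝ) - 1) / r * (2 / ((r : ℝ) * ((r : ℝ) - 1))) *
          (∑ p ∈ Finset.univ.filter (fun p : Fin r × Fin r => p.1 < p.2),
            Real.log (W (x p.1) (x p.2))) +
        (1 / (r : ℝ)) * Real.log c) := by
    classical
    have hrne : (r:ℝ) ≠ 0 := ne_of_gt hrpos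
    have hr1ne : (r:ℝ) - 1 ≠ 0 := by linarith
    set SP := ∑ p ∈ Finset.univ.filter (fun p : Fin r × Fin r => p.1 < p.2),
        Real.log (W (x p.1) (x p.2)) with hSP
    have hcoef : ((r : ℝ) - 1) / r * (2 / ((r : ℝ) * ((r : ℝ) - 1))) = 2 / (r:ℝ)^2 := by
      field_simp
    -- swap sum
    have hswap : ∑ p ∈ Finset.univ.filter (fun p : Fin r × Fin r => p.2 < p.1),
        Real.log (W (x p.1) (x p.2)) = SP := by
      rw [hSP]
      apply Finset.sum_equiv (Equiv.prodComm (Fin r) (Fin r))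
      · intro p; simp
      · intro p _
        simp only [Equiv.prodComm_apply, Prod.fst_swap, Prod.snd_swap]
        rw [hsymm]
    -- diagonal sum
    have hdiag : ∑ p ∈ Finset.univ.filter (fun p : Fin r × Fin r => ¬ p.1 < p.2 ∧ ¬ p.2 < p.1),
        Real.log (W (x p.1) (x p.2)) = ∑ i : Fin r, Real.log (W (x i) (x i)) := by
      apply Finset.sum_nbij' (fun p => p.1) (fun i => (i, i))
      · intro p hp; simp
      · intro i _; simp
      · intro p hp
        simp only [Finset.mem_filter, Finset.mem_univ, true_and] at hp
        have : p.1 = p.2 := le_antisymm (not_lt.1 hp.2) (not_lt.1 hp.1)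
        simp [Prod.ext_iff, this]
      · intro i _; rfl
      · intro p hp
        simp only [Finset.mem_filter, Finset.mem_univ, true_and] at hp
        have : p.1 = p.2 := le_antisymm (not_lt.1 hp.2) (not_lt.1 hp.1)
        rw [← this]
    have hdecomp : ∑ p : Fin r × Fin r, Real.log (W (x p.1) (x p.2))
        = SP + (∑ p ∈ Finset.univ.filter (fun p : Fin r × Fin r => p.2 < p.1),
            Real.log (W (x p.1) (x p.2)))
          + ∑ p ∈ Finset.univ.filter (fun p : Fin r × Fin r => ¬ p.1 < p.2 ∧ ¬ p.2 < p.1),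
            Real.log (W (x p.1) (x p.2)) := by
      rw [hSP, ← Finset.sum_filter_add_sum_filter_not Finset.univ
        (fun p : Fin r × Fin r => p.1 < p.2) (fun p => Real.log (W (x p.1) (x p.2)))]
      rw [← Finset.sum_filter_add_sum_filter_not
        (Finset.univ.filter (fun p : Fin r × Fin r => ¬ p.1 < p.2))
        (fun p => p.2 < p.1) (fun p => Real.log (W (x p.1) (x p.2)))]
      rw [Finset.filter_filter, Finset.filter_filter]
      have e1 : Finset.univ.filter (fun p : Fin r × Fin r => ¬ p.1 < p.2 ∧ p.2 < p.1)
          = Finset.univ.filter (fun p : Fin r × Fin r => p.2 < p.1) := by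
        apply Finset.filter_congr
        intro p _
        constructor
        · exact fun h => h.2
        · exact fun h => ⟨lt_asymm h, h⟩
      rw [e1]
      ring
    have hdiagge : (r:ℝ) * Real.log c ≤ ∑ i : Fin r, Real.log (W (x i) (x i)) := by
      have h : ∀ i : Fin r, Real.log c ≤ Real.log (W (x i) (x i)) := fun i =>
        Real.log_le_log hc (hrange _ _ (hxin i) (hxin i)).1
      calc (r:ℝ) * Real.log c = ∑ _i : Fin r, Real.log c := by
            rw [Finset.sum_const, Finset.card_univ, Fintype.card_fin, nsmul_eq_mul]
        _ ≤ _ := Finset.sum_le_sum (fun i _ => h i)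
    have hinv : ∑ p : Fin r × Fin r, Real.log (1 / W (x p.1) (x p.2))
        = - ∑ p : Fin r × Fin r, Real.log (W (x p.1) (x p.2)) := by
      rw [← Finset.sum_neg_distrib]
      apply Finset.sum_congr rfl
      intro p _
      rw [one_div, Real.log_inv]
    have hineq : 2 * SP + (r:ℝ) * Real.log c ≤ ∑ p : Fin r × Fin r, Real.log (W (x p.1) (x p.2)) := by
      rw [hdecomp, hswap]
      linarith [hdiag, hdiagge]
    rw [hinv, hcoef]
    have key := mul_le_mul_of_nonneg_left hineq (by positivity : (0:ℝ) ≤ 1/(r:ℝ)^2)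
    have e2 : (1/(r:ℝ)^2) * (2 * SP + (r:ℝ) * Real.log c)
        = 2/(r:ℝ)^2 * SP + (1/(r:ℝ)) * Real.log c := by
      field_simp
    rw [e2] at key
    linarith
  exact le_trans hsInfA hB
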